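/- A subgroup G of SL(2,ℂ) has a common eigenvector (i.e., there exists a nonzero vector v ∈ ℂ² such that every g ∈ G maps the line ℂ·v into itself) if and only if tr(g h g⁻¹ h⁻¹) = 2 for all g, h ∈ G. -/

import Mathlib

open Matrix

namespace Sl2Red

abbrev SL2 := Matrix.SpecialLinearGroup (Fin 2) ℂ
abbrev M2 := Matrix (Fin 2) (Fin 2) ℂ

lemma CH2 (A : M2) (v : Fin 2 → ℂ) :
    A *ᵥ (A *ᵥ v) = A.trace • (A *ᵥ v) - A.det • v := by
  funext i
  fin_cases i <;>
    simp [mulVec, dotProduct, Fin.sum_univ_two, Matrix.trace, Matrix.diag,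
      det_fin_two] <;> ring

lemma smul_cancel {v : Fin 2 → ℂ} (hv : v ≠ 0) {x y : ℂ} (h : x • v = y • v) : x = y := by
  by_contra hxy
  apply hv
  have h2 : (x - y) • v = 0 := by rw [sub_smul, h, sub_self]
  rcases smul_eq_zero.mp h2 with h3 | h3
  · exact absurd (sub_eq_zero.mp h3) hxy
  · exact h3

lemma sl2_det (h : SL2) : h.val 0 0 * h.val 1 1 - h.val 0 1 * h.val 1 0 = 1 := by
  have := h.2; rwa [det_fin_two] at this

lemma trace_comm (D h : SL2) :
    Matrix.trace ((D * h * D⁻¹ * h⁻¹ : SL2) : M2) =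
      Matrix.trace ((D : M2) * (h : M2) * (D : M2).adjugate * (h : M2).adjugate) := by
  simp [Matrix.SpecialLinearGroup.coe_mul, Matrix.SpecialLinearGroup.coe_inv]

lemma trace_comm_diag (lam mu : ℂ) (D h : SL2) (hD : D.val = !![lam, 0; 0, mu]) :
    Matrix.trace ((D * h * D⁻¹ * h⁻¹ : SL2) : M2) =
      2 - h.val 0 1 * h.val 1 0 * (lam - mu) ^ 2 := by
  have hdetD : lam * mu = 1 := by
    have := D.2; rw [hD, det_fin_two] at this; simpa using this
  have hdeth := sl2_det h
  rw [trace_comm, adjugate_fin_two, adjugate_fin_two, hD]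
  rw [Matrix.eta_fin_two h.val]
  simp [Matrix.trace, Matrix.diag, Matrix.mul_apply, Fin.sum_univ_two]
  linear_combination 2 * hdeth + (2 * h.val 0 0 * h.val 1 1 + h.val 0 1 * h.val 1 0 * (lam^2 + mu^2) - (2 + lam^2 + mu^2) * (h.val 0 1 * h.val 1 0)) * hdetD

lemma trace_comm_unip (eps beta : ℂ) (U h : SL2) (hU : U.val = !![eps, beta; 0, eps])
    (he : eps ^ 2 = 1) :
    Matrix.trace ((U * h * U⁻¹ * h⁻¹ : SL2) : M2) =
      2 + beta ^ 2 * h.val 1 0 ^ 2 := by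
  have hdeth := sl2_det h
  rw [trace_comm, adjugate_fin_two, adjugate_fin_two, hU]
  rw [Matrix.eta_fin_two h.val]
  simp [Matrix.trace, Matrix.diag, Matrix.mul_apply, Fin.sum_univ_two]
  linear_combination (2 * h.val 0 0 * h.val 1 1 + beta^2 * h.val 1 0^2 + h.val 0 1 * h.val 1 0 * (1 + eps^2) + 1 - h.val 0 0 * h.val 1 1 - beta^2 * h.val 1 0^2 - h.val 0 1 * h.val 1 0 * (2 + eps^2)) * he + (1 + eps^2) * hdeth

lemma trace_conj (Q k : SL2) :
    Matrix.trace ((Q⁻¹ * k * Q : SL2) : M2) = Matrix.trace (k : M2) := by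
  have h1 : (Q⁻¹ * k * Q : SL2) = Q⁻¹ * (k * Q) := by rw [mul_assoc]
  rw [h1, Matrix.SpecialLinearGroup.coe_mul, Matrix.trace_mul_comm,
    ← Matrix.SpecialLinearGroup.coe_mul, mul_inv_cancel_right]

lemma comm_conj (Q g h : SL2) :
    (Q⁻¹ * g * Q) * (Q⁻¹ * h * Q) * (Q⁻¹ * g * Q)⁻¹ * (Q⁻¹ * h * Q)⁻¹ =
      Q⁻¹ * (g * h * g⁻¹ * h⁻¹) * Q := by group

lemma sl2_mulVec_inj (Q : SL2) {x y : Fin 2 → ℂ}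
    (h : (Q : M2) *ᵥ x = (Q : M2) *ᵥ y) : x = y := by
  have h2 : (Q⁻¹ : SL2).val *ᵥ ((Q : M2) *ᵥ x) = (Q⁻¹ : SL2).val *ᵥ ((Q : M2) *ᵥ y) := by
    rw [h]
  rwa [Matrix.mulVec_mulVec, Matrix.mulVec_mulVec, ← Matrix.SpecialLinearGroup.coe_mul,
    inv_mul_cancel, Matrix.SpecialLinearGroup.coe_one, Matrix.one_mulVec,
    Matrix.one_mulVec] at h2

lemma conj_col (Q g : SL2) (lam : ℂ) (j : Fin 2)
    (h : (g : M2) *ᵥ (fun i => Q.val i j) = lam • (fun i => Q.val i j)) :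
    ∀ i, (Q⁻¹ * g * Q : SL2).val i j = lam * (1 : M2) i j := by
  have hQ : (Q : M2) * ((Q⁻¹ * g * Q : SL2) : M2) = (g : M2) * (Q : M2) := by
    rw [← Matrix.SpecialLinearGroup.coe_mul, ← Matrix.SpecialLinearGroup.coe_mul]
    congr 1
    group
    rfl
  have key : (Q : M2) *ᵥ (fun k => (Q⁻¹ * g * Q : SL2).val k j) =
      (Q : M2) *ᵥ (fun k => lam * (1 : M2) k j) := by
    funext i
    have h1 : ((Q : M2) * ((Q⁻¹ * g * Q : SL2) : M2)) i j = ((g : M2) * (Q : M2)) i j := by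
      rw [hQ]
    have h2 := congrFun h i
    simp only [Matrix.mul_apply, Fin.sum_univ_two] at h1
    simp only [Matrix.mulVec, dotProduct, Fin.sum_univ_two, Pi.smul_apply,
      smul_eq_mul] at h2 ⊢
    fin_cases j <;> simp_all [Matrix.one_apply, Fin.sum_univ_two] <;> ring
  have := sl2_mulVec_inj Q key
  intro i
  exact congrFun this i

lemma reducible_of_conj (G : Subgroup SL2) (Q : SL2) (v' : Fin 2 → ℂ) (hv' : v' ≠ 0)
    (h : ∀ g ∈ G, ∃ c : ℂ, ((Q⁻¹ * g * Q : SL2) : M2) *ᵥ v' = c • v') :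
    ∃ v : Fin 2 → ℂ, v ≠ 0 ∧ ∀ g ∈ G, ∃ c : ℂ, (g : M2) *ᵥ v = c • v := by
  refine ⟨(Q : M2) *ᵥ v', ?_, ?_⟩
  · intro h0
    apply hv'
    have := sl2_mulVec_inj Q (x := v') (y := 0) (by simpa using h0)
    simpa using this
  · intro g hg
    obtain ⟨c, hc⟩ := h g hg
    refine ⟨c, ?_⟩
    have h1 : (g : M2) *ᵥ ((Q : M2) *ᵥ v') = (Q : M2) *ᵥ (((Q⁻¹ * g * Q : SL2) : M2) *ᵥ v') := by
      rw [Matrix.mulVec_mulVec, Matrix.mulVec_mulVec, ← Matrix.SpecialLinearGroup.coe_mul,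
        ← Matrix.SpecialLinearGroup.coe_mul]
      congr 1
      group
    rw [h1, hc, Matrix.mulVec_smul]

lemma exists_eigen (g : SL2) (lam : ℂ) (hquad : lam ^ 2 - (g : M2).trace * lam + 1 = 0) :
    ∃ v : Fin 2 → ℂ, v ≠ 0 ∧ (g : M2) *ᵥ v = lam • v := by
  have hdet0 : ((g : M2) - lam • 1).det = 0 := by
    rw [det_fin_two]
    have hd := sl2_det g
    simp only [Matrix.trace, Matrix.diag, Fin.sum_univ_two] at hquad
    simp only [Matrix.sub_apply, Matrix.smul_apply, Matrix.one_apply_eq,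
      Matrix.one_apply_ne (by decide : (0 : Fin 2) ≠ 1),
      Matrix.one_apply_ne (by decide : (1 : Fin 2) ≠ 0), smul_eq_mul, mul_one, mul_zero,
      sub_zero]
    linear_combination hquad + hd
  obtain ⟨v, hv0, hv⟩ := Matrix.exists_mulVec_eq_zero_iff.mpr hdet0
  refine ⟨v, hv0, ?_⟩
  rw [Matrix.sub_mulVec] at hv
  have h1 : (lam • (1 : M2)) *ᵥ v = lam • v := by
    rw [Matrix.smul_mulVec, Matrix.one_mulVec]
  rw [h1] at hv
  exact sub_eq_zero.mp hv

lemma dep_of_det {v w : Fin 2 → ℂ} (hv : v ≠ 0) (hd : v 0 * w 1 - w 0 * v 1 = 0) :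
    ∃ c : ℂ, w = c • v := by
  rcases (by
    by_contra hc
    push_neg at hc
    exact hv (funext fun i => by fin_cases i <;> simp [hc.1, hc.2] : v = 0) :
      v 0 ≠ 0 ∨ v 1 ≠ 0) with h0 | h1
  · refine ⟨w 0 / v 0, funext fun i => ?_⟩
    fin_cases i <;> simp only [Fin.zero_eta, Fin.mk_one, Fin.isValue, Pi.smul_apply, smul_eq_mul] <;> field_simp <;>
      (first | linear_combination hd | linear_combination -hd | linear_combination 2*hd | linear_combination (-2)*hd)
  · refine ⟨w 1 / v 1, funext fun i => ?_⟩
    fin_cases i <;> simp only [Fin.zero_eta, Fin.mk_one, Fin.isValue, Pi.smul_apply, smul_eq_mul] <;> field_simp <;>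
      (first | linear_combination hd | linear_combination -hd | linear_combination 2*hd | linear_combination (-2)*hd)

lemma comm_trace_transfer (G : Subgroup SL2)
    (H : ∀ g ∈ G, ∀ h ∈ G, Matrix.trace ((g * h * g⁻¹ * h⁻¹ : SL2) : M2) = 2)
    (Q : SL2) {g h : SL2} (hg : g ∈ G) (hh : h ∈ G) :
    Matrix.trace (((Q⁻¹ * g * Q) * (Q⁻¹ * h * Q) * (Q⁻¹ * g * Q)⁻¹ * (Q⁻¹ * h * Q)⁻¹ : SL2)
      : M2) = 2 := by
  rw [comm_conj, trace_conj]
  exact H g hg h hh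

lemma mulVec_e1 (A : SL2) : (A : M2) *ᵥ ![1, 0] = A.val 0 0 • ![1, 0] + A.val 1 0 • ![0, 1] := by
  funext i
  fin_cases i <;> simp [Matrix.mulVec, dotProduct, Fin.sum_univ_two]

lemma eig_e1 {A : SL2} (h10 : A.val 1 0 = 0) :
    ∃ c : ℂ, (A : M2) *ᵥ ![1, 0] = c • ![1, 0] := by
  refine ⟨A.val 0 0, ?_⟩
  rw [mulVec_e1, h10]
  simp

lemma eig_e2 {A : SL2} (h01 : A.val 0 1 = 0) :
    ∃ c : ℂ, (A : M2) *ᵥ ![0, 1] = c • ![0, 1] := by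
  refine ⟨A.val 1 1, ?_⟩
  funext i
  fin_cases i <;> simp [Matrix.mulVec, dotProduct, Fin.sum_univ_two, h01]

lemma e1_ne : (![1, 0] : Fin 2 → ℂ) ≠ 0 := by
  intro h; simpa using congrFun h 0

lemma e2_ne : (![0, 1] : Fin 2 → ℂ) ≠ 0 := by
  intro h; simpa using congrFun h 1

lemma no_mixed (A B : SL2) (hA01 : A.val 0 1 = 0) (hB10 : B.val 1 0 = 0)
    (hk : (A * B).val 0 1 * (A * B).val 1 0 = 0) : A.val 1 0 = 0 ∨ B.val 0 1 = 0 := by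
  have hA := sl2_det A
  have hB := sl2_det B
  rw [hA01] at hA
  rw [hB10] at hB
  have hA00 : A.val 0 0 ≠ 0 := by intro h0; rw [h0] at hA; simp at hA
  have hB00 : B.val 0 0 ≠ 0 := by intro h0; rw [h0] at hB; simp at hB
  have e1 : (A * B).val 0 1 = A.val 0 0 * B.val 0 1 := by
    have : (A * B).val = A.val * B.val := rfl
    rw [this, Matrix.mul_apply, Fin.sum_univ_two, hA01]
    ring
  have e2 : (A * B).val 1 0 = A.val 1 0 * B.val 0 0 := by
    have : (A * B).val = A.val * B.val := rfl
    rw [this, Matrix.mul_apply, Fin.sum_univ_two, hB10]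
    ring
  rw [e1, e2] at hk
  rcases mul_eq_zero.mp hk with h4 | h4
  · rcases mul_eq_zero.mp h4 with h5 | h5
    · exact absurd h5 hA00
    · exact Or.inr h5
  · rcases mul_eq_zero.mp h4 with h5 | h5
    · exact Or.inl h5
    · exact absurd h5 hB00

lemma case_diag (G : Subgroup SL2)
    (H : ∀ g ∈ G, ∀ h ∈ G, Matrix.trace ((g * h * g⁻¹ * h⁻¹ : SL2) : M2) = 2)
    (Q : SL2) (lam mu : ℂ) (hne : lam ≠ mu) {g : SL2} (hg : g ∈ G)
    (hgQ : (Q⁻¹ * g * Q : SL2).val = !![lam, 0; 0, mu]) :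
    ∃ v : Fin 2 → ℂ, v ≠ 0 ∧ ∀ h ∈ G, ∃ c : ℂ, (h : M2) *ᵥ v = c • v := by
  have claim : ∀ h ∈ G, (Q⁻¹ * h * Q : SL2).val 0 1 * (Q⁻¹ * h * Q : SL2).val 1 0 = 0 := by
    intro h hh
    have ht := comm_trace_transfer G H Q hg hh
    rw [trace_comm_diag lam mu _ _ hgQ] at ht
    have h2 : (Q⁻¹ * h * Q : SL2).val 0 1 * (Q⁻¹ * h * Q : SL2).val 1 0 * (lam - mu) ^ 2 = 0 := by
      linear_combination -ht
    rcases mul_eq_zero.mp h2 with h3 | h3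
    · exact h3
    · exact absurd (pow_eq_zero_iff (by norm_num) |>.mp h3) (sub_ne_zero.mpr hne)
  by_cases hall : ∀ h ∈ G, (Q⁻¹ * h * Q : SL2).val 1 0 = 0
  · exact reducible_of_conj G Q ![1, 0] e1_ne fun h hh => eig_e1 (hall h hh)
  · push_neg at hall
    obtain ⟨h₀, hh₀, hc0⟩ := hall
    have hb0 : (Q⁻¹ * h₀ * Q : SL2).val 0 1 = 0 :=
      (mul_eq_zero.mp (claim h₀ hh₀)).resolve_right hc0
    refine reducible_of_conj G Q ![0, 1] e2_ne fun h hh => eig_e2 ?_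
    by_contra hb
    have hc : (Q⁻¹ * h * Q : SL2).val 1 0 = 0 :=
      (mul_eq_zero.mp (claim h hh)).resolve_left hb
    have hk := claim (h₀ * h) (mul_mem hh₀ hh)
    have hQk : (Q⁻¹ * (h₀ * h) * Q : SL2) = (Q⁻¹ * h₀ * Q) * (Q⁻¹ * h * Q) := by group
    rw [hQk] at hk
    rcases no_mixed _ _ hb0 hc hk with h5 | h5
    · exact hc0 h5
    · exact hb h5

lemma case_unip (G : Subgroup SL2)
    (H : ∀ g ∈ G, ∀ h ∈ G, Matrix.trace ((g * h * g⁻¹ * h⁻¹ : SL2) : M2) = 2)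
    (Q : SL2) (eps beta : ℂ) (he : eps ^ 2 = 1) (hb : beta ≠ 0) {g : SL2} (hg : g ∈ G)
    (hgQ : (Q⁻¹ * g * Q : SL2).val = !![eps, beta; 0, eps]) :
    ∃ v : Fin 2 → ℂ, v ≠ 0 ∧ ∀ h ∈ G, ∃ c : ℂ, (h : M2) *ᵥ v = c • v := by
  refine reducible_of_conj G Q ![1, 0] e1_ne fun h hh => eig_e1 ?_
  have ht := comm_trace_transfer G H Q hg hh
  rw [trace_comm_unip eps beta _ _ hgQ he] at ht
  have h2 : beta ^ 2 * (Q⁻¹ * h * Q : SL2).val 1 0 ^ 2 = 0 := by linear_combination ht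
  rcases mul_eq_zero.mp h2 with h3 | h3
  · exact absurd (pow_eq_zero_iff (by norm_num) |>.mp h3) hb
  · exact pow_eq_zero_iff (by norm_num) |>.mp h3

lemma build_Q {v w : Fin 2 → ℂ} (hd : v 0 * w 1 - w 0 * v 1 ≠ 0) :
    ∃ Q : SL2, ∃ s : ℂ, s ≠ 0 ∧ (fun i => Q.val i 0) = s⁻¹ • v ∧
      (fun i => Q.val i 1) = s⁻¹ • w := by
  obtain ⟨s, hs⟩ := IsAlgClosed.exists_pow_nat_eq (v 0 * w 1 - w 0 * v 1) (n := 2) two_pos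
  have hs0 : s ≠ 0 := by
    intro h0
    rw [h0] at hs
    simp at hs
    exact hd hs.symm
  have hdet : (s⁻¹ • !![v 0, w 0; v 1, w 1] : M2).det = 1 := by
    rw [Matrix.det_smul, Fintype.card_fin, det_fin_two_of]
    field_simp
    linear_combination -hs
  refine ⟨⟨s⁻¹ • !![v 0, w 0; v 1, w 1], hdet⟩, s, hs0, ?_, ?_⟩ <;>
    (funext i; fin_cases i <;> simp)

end Sl2Red

open Sl2Red

/-- A subgroup `G` of `SL(2,ℂ)` has a common eigenvector if and only if
`tr (g h g⁻¹ h⁻¹) = 2` for all `g, h ∈ G`. -/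
theorem reducible_iff_trace_commutator_eq_two
    (G : Subgroup (SpecialLinearGroup (Fin 2) ℂ)) :
    (∃ v : Fin 2 → ℂ, v ≠ 0 ∧ ∀ g ∈ G,
        ∃ c : ℂ, (g : Matrix (Fin 2) (Fin 2) ℂ) *ᵥ v = c • v) ↔
    (∀ g ∈ G, ∀ h ∈ G,
        Matrix.trace ((g * h * g⁻¹ * h⁻¹ : SpecialLinearGroup (Fin 2) ℂ)
          : Matrix (Fin 2) (Fin 2) ℂ) = 2) := by
  constructor
  · rintro ⟨v, hv0, hv⟩ g hg h hh
    obtain ⟨a, ha⟩ := hv g hg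
    obtain ⟨b, hb⟩ := hv h hh
    obtain ⟨a', ha'⟩ := hv g⁻¹ (inv_mem hg)
    obtain ⟨b', hb'⟩ := hv h⁻¹ (inv_mem hh)
    have key : ∀ (x : SL2) (cx cy : ℂ), (x : M2) *ᵥ v = cx • v →
        ((x⁻¹ : SL2) : M2) *ᵥ v = cy • v → cy * cx = 1 := by
      intro x cx cy hx hy
      have h1 : ((x⁻¹ : SL2) : M2) *ᵥ ((x : M2) *ᵥ v) = (cy * cx) • v := by
        rw [hx, Matrix.mulVec_smul, hy, smul_smul, mul_comm]
      rw [Matrix.mulVec_mulVec, ← Matrix.SpecialLinearGroup.coe_mul, inv_mul_cancel,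
        Matrix.SpecialLinearGroup.coe_one, Matrix.one_mulVec] at h1
      exact (smul_cancel hv0 (by rw [← h1, one_smul])).symm
    have haa := key g a a' ha ha'
    have hbb := key h b b' hb hb'
    have hkv : ((g * h * g⁻¹ * h⁻¹ : SL2) : M2) *ᵥ v = v := by
      have : ((g * h * g⁻¹ * h⁻¹ : SL2) : M2) *ᵥ v =
          (g : M2) *ᵥ ((h : M2) *ᵥ (((g⁻¹ : SL2) : M2) *ᵥ (((h⁻¹ : SL2) : M2) *ᵥ v))) := by
        simp only [Matrix.mulVec_mulVec, Matrix.SpecialLinearGroup.coe_mul, mul_assoc]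
      rw [this]
      simp only [hb', Matrix.mulVec_smul, ha', hb, ha, smul_smul]
      have hc1 : b' * a' * b * a = 1 := by
        linear_combination b' * b * haa + hbb
      rw [hc1, one_smul]
    set k := (g * h * g⁻¹ * h⁻¹ : SL2)
    have hch := CH2 (k : M2) v
    rw [hkv, k.2] at hch
    rw [hkv] at hch
    have h3 : v = Matrix.trace (k : M2) • v - v := by simpa using hch
    have h4 : Matrix.trace (k : M2) • v = v + v := sub_eq_iff_eq_add.mp h3.symm
    have h2 : (Matrix.trace (k : M2)) • v = (2 : ℂ) • v := by rw [h4, two_smul]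
    exact smul_cancel hv0 h2
  · intro H
    by_cases hsc : ∀ g ∈ G, ∃ c : ℂ, (g : M2) = c • (1 : M2)
    · refine ⟨![1, 0], e1_ne, fun g hg => ?_⟩
      obtain ⟨c, hc⟩ := hsc g hg
      exact ⟨c, by rw [hc, Matrix.smul_mulVec, Matrix.one_mulVec]⟩
    · push_neg at hsc
      obtain ⟨g, hg, hgns⟩ := hsc
      set t := Matrix.trace (g : M2) with ht
      obtain ⟨s0, hs0⟩ := IsAlgClosed.exists_pow_nat_eq (t ^ 2 - 4) (n := 2) two_pos
      set lam := (t + s0) / 2 with hlam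
      have hquad : lam ^ 2 - t * lam + 1 = 0 := by
        rw [hlam]
        linear_combination hs0 / 4
      have hlam0 : lam ≠ 0 := by
        intro h0
        rw [h0] at hquad
        simp at hquad
      obtain ⟨v, hv0, hgv⟩ := exists_eigen g lam hquad
      by_cases hl : lam ^ 2 = 1
      · -- unipotent case
        rcases (by
          by_contra hc
          push_neg at hc
          exact hv0 (funext fun i => by fin_cases i <;> simp [hc.1, hc.2] : v = 0) :
            v 0 ≠ 0 ∨ v 1 ≠ 0) with hv00 | hv01
        · -- use w = e2
          have hd : v 0 * (![0, 1] : Fin 2 → ℂ) 1 - (![0, 1] : Fin 2 → ℂ) 0 * v 1 ≠ 0 := by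
            simpa using hv00
          obtain ⟨Q, s, hs, hcol0, hcol1⟩ := build_Q hd
          have heig : (g : M2) *ᵥ (fun i => Q.val i 0) = lam • (fun i => Q.val i 0) := by
            rw [hcol0, Matrix.mulVec_smul, hgv, smul_comm]
          have hc0 := conj_col Q g lam 0 heig
          have e00 : (Q⁻¹ * g * Q : SL2).val 0 0 = lam := by simpa using hc0 0
          have e10 : (Q⁻¹ * g * Q : SL2).val 1 0 = 0 := by simpa [Matrix.one_apply] using hc0 1
          have e11 : (Q⁻¹ * g * Q : SL2).val 1 1 = lam := by
            have hdet := sl2_det (Q⁻¹ * g * Q)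
            rw [e00, e10] at hdet
            have : lam * (Q⁻¹ * g * Q : SL2).val 1 1 = lam * lam := by
              rw [← sq]
              linear_combination hdet - hl
            exact mul_left_cancel₀ hlam0 this
          have hbne : (Q⁻¹ * g * Q : SL2).val 0 1 ≠ 0 := by
            intro hbz
            apply hgns lam
            have hval : (Q⁻¹ * g * Q : SL2).val = lam • (1 : M2) := by
              rw [Matrix.eta_fin_two (Q⁻¹ * g * Q : SL2).val, e00, e10, e11, hbz]
              funext i j
              fin_cases i <;> fin_cases j <;> simp [Matrix.one_apply]
            have hgQ : (g : SL2) = Q * (Q⁻¹ * g * Q) * Q⁻¹ := by group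
            rw [hgQ]
            rw [Matrix.SpecialLinearGroup.coe_mul, Matrix.SpecialLinearGroup.coe_mul, hval]
            rw [Matrix.mul_smul, Matrix.mul_one, Matrix.smul_mul,
              ← Matrix.SpecialLinearGroup.coe_mul, mul_inv_cancel,
              Matrix.SpecialLinearGroup.coe_one]
          obtain ⟨beta, hbeta⟩ : ∃ beta : ℂ, (Q⁻¹ * g * Q : SL2).val 0 1 = beta := ⟨_, rfl⟩
          have hgQ : (Q⁻¹ * g * Q : SL2).val = !![lam, beta; 0, lam] := by
            rw [Matrix.eta_fin_two (Q⁻¹ * g * Q : SL2).val, e00, e10, e11, hbeta]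
          exact case_unip G H Q lam beta hl (hbeta ▸ hbne) hg hgQ
        · have hd : v 0 * (![1, 0] : Fin 2 → ℂ) 1 - (![1, 0] : Fin 2 → ℂ) 0 * v 1 ≠ 0 := by
            simpa using hv01
          obtain ⟨Q, s, hs, hcol0, hcol1⟩ := build_Q hd
          have heig : (g : M2) *ᵥ (fun i => Q.val i 0) = lam • (fun i => Q.val i 0) := by
            rw [hcol0, Matrix.mulVec_smul, hgv, smul_comm]
          have hc0 := conj_col Q g lam 0 heig
          have e00 : (Q⁻¹ * g * Q : SL2).val 0 0 = lam := by simpa using hc0 0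
          have e10 : (Q⁻¹ * g * Q : SL2).val 1 0 = 0 := by simpa [Matrix.one_apply] using hc0 1
          have e11 : (Q⁻¹ * g * Q : SL2).val 1 1 = lam := by
            have hdet := sl2_det (Q⁻¹ * g * Q)
            rw [e00, e10] at hdet
            have : lam * (Q⁻¹ * g * Q : SL2).val 1 1 = lam * lam := by
              rw [← sq]
              linear_combination hdet - hl
            exact mul_left_cancel₀ hlam0 this
          have hbne : (Q⁻¹ * g * Q : SL2).val 0 1 ≠ 0 := by
            intro hbz
            apply hgns lam
            have hval : (Q⁻¹ * g * Q : SL2).val = lam • (1 : M2) := by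
              rw [Matrix.eta_fin_two (Q⁻¹ * g * Q : SL2).val, e00, e10, e11, hbz]
              funext i j
              fin_cases i <;> fin_cases j <;> simp [Matrix.one_apply]
            have hgQ : (g : SL2) = Q * (Q⁻¹ * g * Q) * Q⁻¹ := by group
            rw [hgQ]
            rw [Matrix.SpecialLinearGroup.coe_mul, Matrix.SpecialLinearGroup.coe_mul, hval]
            rw [Matrix.mul_smul, Matrix.mul_one, Matrix.smul_mul,
              ← Matrix.SpecialLinearGroup.coe_mul, mul_inv_cancel,
              Matrix.SpecialLinearGroup.coe_one]
          obtain ⟨beta, hbeta⟩ : ∃ beta : ℂ, (Q⁻¹ * g * Q : SL2).val 0 1 = beta := ⟨_, rfl⟩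
          have hgQ : (Q⁻¹ * g * Q : SL2).val = !![lam, beta; 0, lam] := by
            rw [Matrix.eta_fin_two (Q⁻¹ * g * Q : SL2).val, e00, e10, e11, hbeta]
          exact case_unip G H Q lam beta hl (hbeta ▸ hbne) hg hgQ
      · -- diagonalizable case
        set mu := t - lam with hmu
        have hlm : lam * mu = 1 := by
          rw [hmu]
          linear_combination -hquad
        have hne : lam ≠ mu := by
          intro h0
          apply hl
          rw [sq]
          nth_rewrite 2 [h0]
          exact hlm
        have hquad' : mu ^ 2 - t * mu + 1 = 0 := by
          rw [hmu]
          linear_combination hquad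
        obtain ⟨w, hw0, hgw⟩ := exists_eigen g mu hquad'
        have hd : v 0 * w 1 - w 0 * v 1 ≠ 0 := by
          intro hdz
          obtain ⟨c, hc⟩ := dep_of_det hv0 hdz
          have hcne : c ≠ 0 := by
            intro h0
            rw [h0, zero_smul] at hc
            exact hw0 hc
          have h1 : (g : M2) *ᵥ w = (c * lam) • v := by
            rw [hc, Matrix.mulVec_smul, hgv, smul_smul]
          have h2 : (g : M2) *ᵥ w = (mu * c) • v := by
            rw [hgw, hc, smul_smul]
          have := smul_cancel hv0 (h1.symm.trans h2)
          exact hne (mul_left_cancel₀ hcne (by linear_combination this))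
        obtain ⟨Q, s, hs, hcol0, hcol1⟩ := build_Q hd
        have heig0 : (g : M2) *ᵥ (fun i => Q.val i 0) = lam • (fun i => Q.val i 0) := by
          rw [hcol0, Matrix.mulVec_smul, hgv, smul_comm]
        have heig1 : (g : M2) *ᵥ (fun i => Q.val i 1) = mu • (fun i => Q.val i 1) := by
          rw [hcol1, Matrix.mulVec_smul, hgw, smul_comm]
        have hc0 := conj_col Q g lam 0 heig0
        have hc1 := conj_col Q g mu 1 heig1
        have hgQ : (Q⁻¹ * g * Q : SL2).val = !![lam, 0; 0, mu] := by
          funext i j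
          have f00 : (Q⁻¹ * g * Q : SL2).val 0 0 = lam := by simpa using hc0 0
          have f10 : (Q⁻¹ * g * Q : SL2).val 1 0 = 0 := by
            simpa [Matrix.one_apply] using hc0 1
          have f01 : (Q⁻¹ * g * Q : SL2).val 0 1 = 0 := by
            simpa [Matrix.one_apply] using hc1 0
          have f11 : (Q⁻¹ * g * Q : SL2).val 1 1 = mu := by simpa using hc1 1
          rw [Matrix.eta_fin_two (Q⁻¹ * g * Q : SL2).val, f00, f10, f01, f11]
        exact case_diag G H Q lam mu hne hg hgQ
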